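/- For every real $s > 1$, $\sum_{n=1}^\infty \frac{d(n)^2}{n^s} = \frac{\zeta(s)^4}{\zeta(2s)}$, where $d(n)$ is the number of divisors of $n$ and $\zeta$ is the Riemann zeta function. -/

import Mathlib

open ArithmeticFunction Finset

namespace RamanujanAux

/-! ### Squares and factorizations -/

lemma isSquare_iff_even_factorization {n : ℕ} (hn : n ≠ 0) :
    IsSquare n ↔ ∀ p, Even (n.factorization p) := by
  constructor
  · rintro ⟨k, rfl⟩ p
    have h : (k * k).factorization p = 2 * k.factorization p := by
      rw [← sq, Nat.factorization_pow]; simp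
    rw [h]; exact even_two_mul _
  · intro h
    refine ⟨n.factorization.prod fun p e => p ^ (e / 2), ?_⟩
    have key : (n.factorization.prod fun p e => p ^ (e / 2)) *
        (n.factorization.prod fun p e => p ^ (e / 2)) =
        n.factorization.prod fun p e => p ^ e := by
      simp only [Finsupp.prod]
      rw [← Finset.prod_mul_distrib]
      refine Finset.prod_congr rfl fun p hp => ?_
      rw [← pow_add]
      congr 1
      obtain ⟨c, hc⟩ := h p
      omega
    rw [key, Nat.factorization_prod_pow_eq_self hn]

lemma isSquare_pow_iff_even {p i : ℕ} (hp : p.Prime) : IsSquare (p ^ i) ↔ Even i := by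
  rw [isSquare_iff_even_factorization (pow_ne_zero i hp.pos.ne')]
  constructor
  · intro h
    have := h p
    rwa [hp.factorization_pow, Finsupp.single_eq_same] at this
  · intro h q
    rw [hp.factorization_pow, Finsupp.single_apply]
    split_ifs with hq
    · exact h
    · exact Even.zero

lemma isSquare_mul_iff_of_coprime {m n : ℕ} (hm : m ≠ 0) (hn : n ≠ 0) (hmn : m.Coprime n) :
    IsSquare (m * n) ↔ IsSquare m ∧ IsSquare n := by
  constructor
  · intro h
    rw [isSquare_iff_even_factorization (mul_ne_zero hm hn)] at h
    have hdis : ∀ p, m.factorization p = 0 ∨ n.factorization p = 0 := by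
      intro p
      by_contra hc
      push_neg at hc
      have h1 : p ∣ m := Nat.dvd_of_factorization_pos hc.1
      have h2 : p ∣ n := Nat.dvd_of_factorization_pos hc.2
      have hp : p.Prime := Nat.prime_of_mem_primeFactors
        (Nat.support_factorization m ▸ Finsupp.mem_support_iff.2 hc.1)
      have : p ∣ 1 := hmn ▸ Nat.dvd_gcd h1 h2
      exact hp.one_lt.ne' (Nat.dvd_one.mp this)
    constructor <;> rw [isSquare_iff_even_factorization ‹_›] <;> intro p <;>
      have hsum := h p <;>
      rw [Nat.factorization_mul hm hn, Finsupp.add_apply] at hsum <;>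
      rcases hdis p with h0 | h0 <;> simp [h0] at hsum ⊢ <;> exact hsum
  · rintro ⟨⟨a, rfl⟩, ⟨b, rfl⟩⟩
    exact ⟨a * b, by ring⟩

/-! ### The square-indicator arithmetic function -/

def sqIndN : ArithmeticFunction ℕ :=
  ⟨fun n => if n ≠ 0 ∧ IsSquare n then 1 else 0, by simp⟩

lemma sqIndN_apply (n : ℕ) : sqIndN n = if n ≠ 0 ∧ IsSquare n then 1 else 0 := rfl

lemma isMultiplicative_sqIndN : sqIndN.IsMultiplicative := by
  rw [ArithmeticFunction.IsMultiplicative.iff_ne_zero]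
  constructor
  · simp [sqIndN_apply, IsSquare.one]
  · intro m n hm hn hmn
    simp only [sqIndN_apply, hm, hn, mul_ne_zero hm hn, ne_eq, not_true_eq_false,
      not_false_eq_true, true_and]
    simp only [isSquare_mul_iff_of_coprime hm hn hmn]
    by_cases h1 : IsSquare m <;> by_cases h2 : IsSquare n <;> simp [h1, h2]

/-! ### The combinatorial sum identity -/

lemma gauss (k : ℕ) : 2 * ∑ i ∈ range (k + 1), (i + 1) = (k + 1) * (k + 2) := by
  induction k with
  | zero => simp
  | succ k ih =>
    rw [Finset.sum_range_succ, Nat.mul_add, ih]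
    ring

lemma S1_formula (e : ℕ) :
    6 * ∑ i ∈ range (e + 1), (i + 1) * (e - i + 1) = (e + 1) * (e + 2) * (e + 3) := by
  induction e with
  | zero => simp
  | succ k ih =>
    have hstep : ∑ i ∈ range (k + 2), (i + 1) * (k + 1 - i + 1)
        = (∑ i ∈ range (k + 1), (i + 1) * (k - i + 1))
          + (∑ i ∈ range (k + 1), (i + 1)) + (k + 2) := by
      rw [Finset.sum_range_succ]
      have hcongr : ∀ i ∈ range (k + 1), (i + 1) * (k + 1 - i + 1)
          = (i + 1) * (k - i + 1) + (i + 1) := by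
        intro i hi
        rw [Finset.mem_range] at hi
        have h : k + 1 - i = (k - i) + 1 := by omega
        rw [h]; ring
      rw [Finset.sum_congr rfl hcongr, Finset.sum_add_distrib]
      simp
    rw [hstep]
    have hg := gauss k
    have h6 : 6 * ((∑ i ∈ range (k + 1), (i + 1) * (k - i + 1))
        + (∑ i ∈ range (k + 1), (i + 1)) + (k + 2))
        = 6 * ∑ i ∈ range (k + 1), (i + 1) * (k - i + 1)
          + 3 * (2 * ∑ i ∈ range (k + 1), (i + 1)) + 6 * (k + 2) := by ring
    rw [h6, ih, hg]
    ring

lemma S2_step (k : ℕ) :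
    ∑ i ∈ range (k + 3), (if Even i then (k + 2 - i + 1) ^ 2 else 0)
      = (∑ i ∈ range (k + 1), (if Even i then (k - i + 1) ^ 2 else 0)) + (k + 3) ^ 2 := by
  rw [Finset.sum_range_succ' _ (k + 2), Finset.sum_range_succ' _ (k + 1)]
  have hcongr : ∀ i ∈ range (k + 1),
      (if Even (i + 1 + 1) then (k + 2 - (i + 1 + 1) + 1) ^ 2 else 0)
        = (if Even i then (k - i + 1) ^ 2 else 0) := by
    intro i hi
    have h1 : Even (i + 1 + 1) ↔ Even i := by simp [Nat.even_add_one, Nat.not_even_iff_odd,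
      Nat.odd_add_one]
    have h2 : k + 2 - (i + 1 + 1) = k - i := by omega
    rw [h2]
    exact if_congr h1 rfl rfl
  rw [Finset.sum_congr rfl hcongr]
  simp [Nat.even_add_one]

lemma key_sum (e : ℕ) :
    ∑ i ∈ range (e + 1), (if Even i then (e - i + 1) ^ 2 else 0)
      = ∑ i ∈ range (e + 1), (i + 1) * (e - i + 1) := by
  induction e using Nat.twoStepInduction with
  | zero => decide
  | one => decide
  | more k ih _ =>
    rw [S2_step k, ih]
    have h1 := S1_formula k
    have h2 := S1_formula (k + 2)
    have h6 : 6 * ((∑ i ∈ range (k + 1), (i + 1) * (k - i + 1)) + (k + 3) ^ 2)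
        = 6 * ∑ i ∈ range (k + 2 + 1), (i + 1) * (k + 2 - i + 1) := by
      rw [Nat.mul_add, h1, h2]
      ring
    omega

end RamanujanAux

namespace RamanujanAux

open scoped ArithmeticFunction

lemma sqIndN_prime_pow {p x : ℕ} (hp : p.Prime) :
    sqIndN (p ^ x) = if Even x then 1 else 0 := by
  have h1 : p ^ x ≠ 0 := pow_ne_zero _ hp.pos.ne'
  simp [sqIndN_apply, h1, isSquare_pow_iff_even hp, hp.ne_zero]

lemma conv_id : sqIndN * ((sigma 0).pmul (sigma 0)) = sigma 0 * sigma 0 := by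
  rw [ArithmeticFunction.IsMultiplicative.eq_iff_eq_on_prime_powers _
      (isMultiplicative_sqIndN.mul (isMultiplicative_sigma.pmul isMultiplicative_sigma)) _
      (isMultiplicative_sigma.mul isMultiplicative_sigma)]
  intro p i hp
  rw [mul_apply, mul_apply,
    Nat.sum_divisorsAntidiagonal (fun a b => sqIndN a * ((sigma 0).pmul (sigma 0)) b),
    Nat.sum_divisorsAntidiagonal (fun a b => sigma 0 a * sigma 0 b),
    Nat.sum_divisors_prime_pow hp, Nat.sum_divisors_prime_pow hp]
  have hterm : ∀ x ∈ range (i + 1),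
      sqIndN (p ^ x) * ((sigma 0).pmul (sigma 0)) (p ^ i / p ^ x)
        = if Even x then (i - x + 1) ^ 2 else 0 := by
    intro x hx
    rw [Finset.mem_range] at hx
    have hdiv : p ^ i / p ^ x = p ^ (i - x) := Nat.pow_div (by omega) hp.pos
    rw [hdiv, sqIndN_prime_pow hp, ArithmeticFunction.pmul_apply,
      ArithmeticFunction.sigma_zero_apply_prime_pow hp]
    by_cases h : Even x <;> simp [h, sq]
  have hterm2 : ∀ x ∈ range (i + 1),
      sigma 0 (p ^ x) * sigma 0 (p ^ i / p ^ x) = (x + 1) * (i - x + 1) := by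
    intro x hx
    rw [Finset.mem_range] at hx
    have hdiv : p ^ i / p ^ x = p ^ (i - x) := Nat.pow_div (by omega) hp.pos
    rw [hdiv, ArithmeticFunction.sigma_zero_apply_prime_pow hp,
      ArithmeticFunction.sigma_zero_apply_prime_pow hp]
  rw [Finset.sum_congr rfl hterm, Finset.sum_congr rfl hterm2]
  exact key_sum i

lemma pmul_le_conv (n : ℕ) :
    ((sigma 0).pmul (sigma 0)) n ≤ (sigma 0 * sigma 0 : ArithmeticFunction ℕ) n := by
  rcases eq_or_ne n 0 with rfl | hn
  · simp
  rw [← conv_id, mul_apply]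
  have hmem : ((1, n) : ℕ × ℕ) ∈ n.divisorsAntidiagonal := by
    simp [Nat.mem_divisorsAntidiagonal, hn]
  calc ((sigma 0).pmul (sigma 0)) n
      = sqIndN 1 * ((sigma 0).pmul (sigma 0)) n := by simp [sqIndN_apply]
    _ ≤ _ := Finset.single_le_sum (f := fun q : ℕ × ℕ => sqIndN q.1 * ((sigma 0).pmul (sigma 0)) q.2)
        (fun q _ => Nat.zero_le _) hmem

/-- Helper converting a complex `LSeries` with real-cast coefficients to a real `tsum`. -/
lemma LSeries_eq_ofReal {s : ℝ} (F : ℕ → ℂ) (G : ℕ → ℝ)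
    (hsum : LSeriesSummable F (s : ℂ))
    (h : ∀ n : ℕ, F (n + 1) = ((G n : ℝ) : ℂ)) :
    LSeries F (s : ℂ) = ((∑' n : ℕ, G n / ((n + 1 : ℕ) : ℝ) ^ s : ℝ) : ℂ) := by
  rw [LSeries, Summable.tsum_eq_zero_add hsum, LSeries.term_zero, zero_add, Complex.ofReal_tsum]
  refine tsum_congr fun n => ?_
  rw [LSeries.term_of_ne_zero (Nat.succ_ne_zero n), h n, Complex.ofReal_div,
    Complex.ofReal_cpow (by positivity) s]
  push_cast
  ring

end RamanujanAux

open RamanujanAux in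
open scoped ArithmeticFunction ArithmeticFunction.sigma ArithmeticFunction.zeta in
/-- Ramanujan's identity: for real `s > 1`,
`∑ d(n)² / n^s = ζ(s)⁴ / ζ(2s)`. -/
theorem ramanujan_divisor_squared (s : ℝ) (hs : 1 < s) :
    ∑' n : ℕ, ((n + 1).divisors.card : ℝ) ^ 2 / ((n + 1 : ℕ) : ℝ) ^ s =
      (∑' n : ℕ, 1 / ((n + 1 : ℕ) : ℝ) ^ s) ^ 4 /
        (∑' n : ℕ, 1 / ((n + 1 : ℕ) : ℝ) ^ (2 * s)) := by
  classical
  have hre : 1 < (s : ℂ).re := by simpa using hs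
  -- complex arithmetic functions
  set dC : ArithmeticFunction ℂ := ((σ 0 : ArithmeticFunction ℕ) : ArithmeticFunction ℂ) with hdC
  set qC : ArithmeticFunction ℂ := ((sqIndN : ArithmeticFunction ℕ) : ArithmeticFunction ℂ)
    with hqC
  set FC : ArithmeticFunction ℂ :=
    (((σ 0).pmul (σ 0) : ArithmeticFunction ℕ) : ArithmeticFunction ℂ) with hFC
  -- summability facts
  have h1 : LSeriesSummable 1 (s : ℂ) := LSeriesSummable_one_iff.mpr hre
  have hz : LSeriesSummable (fun n => ((ζ n : ℕ) : ℂ)) (s : ℂ) :=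
    ArithmeticFunction.LSeriesSummable_zeta_iff.mpr hre
  have hzC : LSeriesSummable (fun n => ((ζ : ArithmeticFunction ℂ)) n) (s : ℂ) := hz
  have hzzN : (ζ * ζ : ArithmeticFunction ℕ) = σ 0 := by
    have h := ArithmeticFunction.zeta_mul_pow_eq_sigma (k := 0)
    rwa [ArithmeticFunction.pow_zero_eq_zeta] at h
  have hdzz : dC = (ζ : ArithmeticFunction ℂ) * (ζ : ArithmeticFunction ℂ) := by
    rw [hdC, ← hzzN, ArithmeticFunction.natCoe_mul]
  have hdCs : LSeriesSummable (fun n => dC n) (s : ℂ) := by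
    rw [hdzz]
    exact ArithmeticFunction.LSeriesSummable_mul hzC hzC
  have hconv : LSeriesSummable (fun n => (dC * dC) n) (s : ℂ) :=
    ArithmeticFunction.LSeriesSummable_mul hdCs hdCs
  have hcastconv : dC * dC = ((σ 0 * σ 0 : ArithmeticFunction ℕ) : ArithmeticFunction ℂ) := by
    rw [hdC, ArithmeticFunction.natCoe_mul]
  have hFCs : LSeriesSummable (fun n => FC n) (s : ℂ) := by
    refine Summable.of_norm_bounded hconv.norm fun n => LSeries.norm_term_le _ ?_
    rw [hFC, hcastconv]
    simp only [ArithmeticFunction.natCoe_apply, Complex.norm_natCast]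
    exact_mod_cast pmul_le_conv n
  have hqs : LSeriesSummable (fun n => qC n) (s : ℂ) := by
    refine Summable.of_norm_bounded h1.norm fun n => LSeries.norm_term_le _ ?_
    rw [hqC]
    simp only [ArithmeticFunction.natCoe_apply, Complex.norm_natCast, Pi.one_apply, norm_one]
    exact_mod_cast (by rw [sqIndN_apply]; split <;> norm_num : (sqIndN n : ℕ) ≤ 1)
  -- the convolution identity over ℂ
  have hidC : qC * FC = dC * dC := by
    rw [hqC, hFC, ← ArithmeticFunction.natCoe_mul, conv_id, hcastconv]
  -- zeta relation
  have hLzeta : LSeries (fun n => ((ζ : ArithmeticFunction ℂ)) n) (s : ℂ)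
      = LSeries 1 (s : ℂ) := by
    refine LSeries_congr (fun {n} hn => ?_) _
    simp [ArithmeticFunction.natCoe_apply, ArithmeticFunction.zeta_apply, hn]
  have hLd : LSeries (fun n => dC n) (s : ℂ) = LSeries 1 (s : ℂ) ^ 2 := by
    rw [hdzz, ArithmeticFunction.LSeries_mul' hzC hzC, hLzeta, sq]
  have hprod : LSeries (fun n => qC n) (s : ℂ) * LSeries (fun n => FC n) (s : ℂ)
      = LSeries 1 (s : ℂ) ^ 4 := by
    rw [← ArithmeticFunction.LSeries_mul' hqs hFCs, hidC,
      ArithmeticFunction.LSeries_mul' hdCs hdCs, hLd]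
    ring
  -- convert to real tsums
  set B : ℝ := ∑' n : ℕ, 1 / ((n + 1 : ℕ) : ℝ) ^ s with hB
  set A : ℝ := ∑' n : ℕ, ((n + 1).divisors.card : ℝ) ^ 2 / ((n + 1 : ℕ) : ℝ) ^ s with hA
  set C : ℝ := ∑' n : ℕ, 1 / ((n + 1 : ℕ) : ℝ) ^ (2 * s) with hC
  have hLB : LSeries 1 (s : ℂ) = (B : ℂ) := by
    rw [hB]
    exact LSeries_eq_ofReal 1 (fun _ => 1) h1 (fun n => by norm_num)
  have hLA : LSeries (fun n => FC n) (s : ℂ) = (A : ℂ) := by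
    rw [hA]
    refine LSeries_eq_ofReal _ (fun n => ((n + 1).divisors.card : ℝ) ^ 2) hFCs fun n => ?_
    rw [hFC]
    simp only [ArithmeticFunction.natCoe_apply, ArithmeticFunction.pmul_apply,
      ArithmeticFunction.sigma_zero_apply]
    push_cast
    ring
  -- the square-indicator series is the `2s` zeta series
  have hreindex : (∑' n : ℕ, (if IsSquare (n + 1) then (1 : ℝ) else 0) / ((n + 1 : ℕ) : ℝ) ^ s)
      = C := by
    rw [hC]
    have hgm : StrictMono (fun k : ℕ => k * k + 2 * k) := by
      intro a b h
      simp only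
      have h1 : a * a ≤ b * b := Nat.mul_le_mul h.le h.le
      omega
    have hg : Function.Injective (fun k : ℕ => k * k + 2 * k) := hgm.injective
    have hsupp : Function.support
        (fun n : ℕ => (if IsSquare (n + 1) then (1 : ℝ) else 0) / ((n + 1 : ℕ) : ℝ) ^ s)
        ⊆ Set.range (fun k : ℕ => k * k + 2 * k) := by
      intro n hn
      have hsq : IsSquare (n + 1) := by
        by_contra hc
        simp [hc] at hn
      obtain ⟨m, hm⟩ := hsq
      have hm0 : m ≠ 0 := by rintro rfl; omega
      obtain ⟨k, rfl⟩ := Nat.exists_eq_succ_of_ne_zero hm0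
      refine ⟨k, ?_⟩
      have hr : k.succ * k.succ = k * k + 2 * k + 1 := by rw [Nat.succ_eq_add_one]; ring
      simp only
      omega
    have := Function.Injective.tsum_eq hg (f := fun n : ℕ =>
      (if IsSquare (n + 1) then (1 : ℝ) else 0) / ((n + 1 : ℕ) : ℝ) ^ s) hsupp
    rw [← this]
    refine tsum_congr fun k => ?_
    have hk : k * k + 2 * k + 1 = (k + 1) ^ 2 := by ring
    simp only [hk]
    rw [if_pos ⟨k + 1, by ring⟩]
    have hpos : (0 : ℝ) < ((k + 1 : ℕ) : ℝ) := by positivity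
    rw [show (((k + 1) ^ 2 : ℕ) : ℝ) = ((k + 1 : ℕ) : ℝ) ^ (2 : ℕ) by push_cast; ring,
      ← Real.rpow_natCast ((k + 1 : ℕ) : ℝ) 2, ← Real.rpow_mul hpos.le]
    norm_num
  have hLC : LSeries (fun n => qC n) (s : ℂ) = (C : ℂ) := by
    rw [← hreindex]
    refine LSeries_eq_ofReal _ (fun n => if IsSquare (n + 1) then (1 : ℝ) else 0) hqs fun n => ?_
    rw [hqC]
    simp only [ArithmeticFunction.natCoe_apply, sqIndN_apply, Nat.succ_ne_zero, ne_eq,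
      not_false_eq_true, true_and]
    split <;> norm_num
  -- put everything together
  have key : C * A = B ^ 4 := by
    rw [hLC, hLA, hLB] at hprod
    exact_mod_cast hprod
  have hCsum : Summable (fun n : ℕ => 1 / ((n + 1 : ℕ) : ℝ) ^ (2 * s)) := by
    have h := Real.summable_one_div_nat_rpow.mpr (by linarith : 1 < 2 * s)
    exact_mod_cast (summable_nat_add_iff 1).mpr h
  have hCpos : 0 < C := by
    rw [hC]
    refine Summable.tsum_pos hCsum (fun i => by positivity) 0 ?_
    norm_num
  rw [eq_div_iff hCpos.ne']
  linarith [key]
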